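/- Let R be an integral domain which is a unique factorization domain, let m ≥ 1, and let p₁,…,pₘ be nonzero elements of R that are pairwise relatively prime. Let P = diag(p₁,…,pₘ), and let Q and K be m × m matrices over R satisfying P·Q = K·P; assume moreover that pᵢ and Qᵢᵢ are relatively prime for every i. Then the syzygy module of the pair (P, Q) is generated by (K, −P): for all m × m matrices A and B over R with A·P + B·Q = 0, there exists an m × m matrix L over R such that A = L·K and B = −L·P. -/
import Mathlib


/-- Let `P = diag(p₁,…,pₘ)` be a diagonal matrix over a UFD whose nonzero diagonal
entries are pairwise relatively prime, let `Q`, `K` satisfy the symmetry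
condition `P·Q = K·P`, and assume moreover that `pᵢ` and `Qᵢᵢ` are relatively
prime for every `i` (the joint characteristic variety has codimension `> 1`).
Then the syzygy module of the pair `(P, Q)` is generated by `(K, −P)`: every
pair of matrices `(A, B)` with `A·P + B·Q = 0` has the form `(L·K, −L·P)`. -/
theorem syzygy_module_generated_by_symmetry
    {R : Type*} [CommRing R] [IsDomain R] [UniqueFactorizationMonoid R]
    (m : ℕ) (hm : 1 ≤ m) (p : Fin m → R) (hp : ∀ i, p i ≠ 0)
    (hrel : ∀ i j, i ≠ j → IsRelPrime (p i) (p j))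
    (Q K : Matrix (Fin m) (Fin m) R)
    (hsym : Matrix.diagonal p * Q = K * Matrix.diagonal p)
    (hQ : ∀ i, IsRelPrime (p i) (Q i i)) :
    ∀ A B : Matrix (Fin m) (Fin m) R,
      A * Matrix.diagonal p + B * Q = 0 →
      ∃ L : Matrix (Fin m) (Fin m) R, A = L * K ∧ B = -(L * Matrix.diagonal p) := by
  intro A B hAB
  have hdvd : ∀ i j, p j ∣ B i j := by
    intro i j
    have heq : A i j * p j + ∑ k, B i k * Q k j = 0 := by
      have := congrFun (congrFun hAB i) j
      simpa [Matrix.add_apply, Matrix.mul_apply, Matrix.diagonal_apply, mul_ite,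
        Finset.sum_ite_eq'] using this
    have h1 : p j ∣ ∑ k, B i k * Q k j :=
      ⟨-(A i j), by linear_combination heq⟩
    have h2 : p j ∣ ∑ k ∈ Finset.univ.erase j, B i k * Q k j := by
      apply Finset.dvd_sum
      intro k hk
      have hkj : k ≠ j := Finset.ne_of_mem_erase hk
      have hpk : p k * Q k j = K k j * p j := by
        have := congrFun (congrFun hsym k) j
        simpa [Matrix.mul_apply, Matrix.diagonal_apply, mul_ite, ite_mul,
          Finset.sum_ite_eq, Finset.sum_ite_eq'] using this
      have hd : p j ∣ p k * Q k j := ⟨K k j, by rw [hpk, mul_comm]⟩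
      exact ((hrel j k hkj.symm).dvd_of_dvd_mul_left hd).mul_left _
    have h3 : p j ∣ B i j * Q j j := by
      have hsum : ∑ k, B i k * Q k j
          = B i j * Q j j + ∑ k ∈ Finset.univ.erase j, B i k * Q k j :=
        (Finset.add_sum_erase _ _ (Finset.mem_univ j)).symm
      have := dvd_sub h1 h2
      rwa [hsum, add_sub_cancel_right] at this
    exact (hQ j).dvd_of_dvd_mul_right h3
  set L : Matrix (Fin m) (Fin m) R := Matrix.of fun i j => -(hdvd i j).choose with hL
  have hB : B = -(L * Matrix.diagonal p) := by
    ext i j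
    simp only [Matrix.neg_apply, Matrix.mul_diagonal, hL, Matrix.of_apply]
    rw [neg_mul, neg_neg]
    exact (hdvd i j).choose_spec.trans (mul_comm _ _)
  refine ⟨L, ?_, hB⟩
  have hLP : L * Matrix.diagonal p = -B := by rw [hB, neg_neg]
  have key : (A - L * K) * Matrix.diagonal p = 0 := by
    have h4 : L * K * Matrix.diagonal p = L * (Matrix.diagonal p * Q) := by
      rw [hsym, mul_assoc]
    rw [sub_mul, h4, ← mul_assoc, hLP, sub_eq_zero, neg_mul,
      eq_neg_of_add_eq_zero_left hAB]
  ext i j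
  have hz : (A - L * K) i j * p j = 0 := by
    have := congrFun (congrFun key i) j
    simpa [Matrix.mul_diagonal] using this
  have h5 := (mul_eq_zero.mp hz).resolve_right (hp j)
  exact sub_eq_zero.mp (by simpa [Matrix.sub_apply] using h5)
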